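/- arXiv:2604.05414 — 2 statements merged into one kernel-verified Lean document; each statement's English description precedes it below -/
import Mathlib

section
/- For the linear map L : P ↦ Φ with Φ_ij = (P_ji − P_ij)/(s_i + s_j), the operator norm (with respect to Frobenius norms) equals 2/(s_2 + s_3), where s_1 ≥ s_2 ≥ s_3 > 0. -/
open Matrix BigOperators

/-- Frobenius norm on 3×3 real matrices. -/
noncomputable def fnorm (A : Matrix (Fin 3) (Fin 3) ℝ) : ℝ :=
  Real.sqrt (∑ i, ∑ j, A i j ^ 2)

lemma pair_key (x y c d : ℝ) (hc : 0 < c) (hcd : c ≤ d) :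
    ((y - x) / d) ^ 2 + ((x - y) / d) ^ 2 ≤ (2 / c) ^ 2 * (x ^ 2 + y ^ 2) := by
  have hd : 0 < d := lt_of_lt_of_le hc hcd
  have hc2 : c ^ 2 ≤ d ^ 2 := by nlinarith
  have h4 : (2 / c) ^ 2 * (x ^ 2 + y ^ 2) = 4 * (x ^ 2 + y ^ 2) / c ^ 2 := by
    rw [div_pow]; ring
  rw [h4, div_pow, div_pow, ← add_div,
    div_le_div_iff₀ (by positivity) (by positivity)]
  nlinarith [sq_nonneg (x + y), mul_nonneg (sq_nonneg (x + y)) (sq_nonneg c),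
    mul_le_mul_of_nonneg_left hc2 (sq_nonneg (x + y)),
    mul_le_mul_of_nonneg_left hc2 (sq_nonneg (x - y))]

/-- The operator norm (Frobenius-to-Frobenius) of the linear map `L : P ↦ Φ` with
`Φᵢⱼ = (Pⱼᵢ − Pᵢⱼ)/(sᵢ + sⱼ)` for `i ≠ j` and zero diagonal, for
`s₁ ≥ s₂ ≥ s₃ > 0`, equals `2/(s₂ + s₃)`: it is an upper bound of the ratio
`‖L P‖_F/‖P‖_F` and is attained. -/
theorem svd_jacobian_operator_norm
    (s : Fin 3 → ℝ) (hpos : ∀ i, 0 < s i)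
    (hord : s 1 ≤ s 0 ∧ s 2 ≤ s 1)
    (L : Matrix (Fin 3) (Fin 3) ℝ →ₗ[ℝ] Matrix (Fin 3) (Fin 3) ℝ)
    (hL : ∀ P i j, L P i j = if i = j then 0 else (P j i - P i j) / (s i + s j)) :
    (∀ P : Matrix (Fin 3) (Fin 3) ℝ, fnorm (L P) ≤ (2 / (s 1 + s 2)) * fnorm P) ∧
    (∃ P : Matrix (Fin 3) (Fin 3) ℝ, P ≠ 0 ∧
      fnorm (L P) = (2 / (s 1 + s 2)) * fnorm P) := by
  obtain ⟨h01, h12⟩ := hord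
  have h0 := hpos 0
  have h1 := hpos 1
  have h2 := hpos 2
  have hcpos : 0 < s 1 + s 2 := by linarith
  have h2c : (0:ℝ) ≤ 2 / (s 1 + s 2) := by positivity
  constructor
  · intro P
    have hsum : ∑ i, ∑ j, (L P) i j ^ 2 ≤ (2 / (s 1 + s 2)) ^ 2 * ∑ i, ∑ j, P i j ^ 2 := by
      have k01 := pair_key (P 0 1) (P 1 0) (s 1 + s 2) (s 0 + s 1) hcpos (by linarith)
      have k02 := pair_key (P 0 2) (P 2 0) (s 1 + s 2) (s 0 + s 2) hcpos (by linarith)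
      have k12 := pair_key (P 1 2) (P 2 1) (s 1 + s 2) (s 1 + s 2) hcpos le_rfl
      have hd : 0 ≤ (2 / (s 1 + s 2)) ^ 2 * (P 0 0 ^ 2 + P 1 1 ^ 2 + P 2 2 ^ 2) := by positivity
      have hexp : (2 / (s 1 + s 2)) ^ 2 * ∑ i, ∑ j, P i j ^ 2 =
          (2 / (s 1 + s 2)) ^ 2 * (P 0 1 ^ 2 + P 1 0 ^ 2) +
          (2 / (s 1 + s 2)) ^ 2 * (P 0 2 ^ 2 + P 2 0 ^ 2) +
          (2 / (s 1 + s 2)) ^ 2 * (P 1 2 ^ 2 + P 2 1 ^ 2) +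
          (2 / (s 1 + s 2)) ^ 2 * (P 0 0 ^ 2 + P 1 1 ^ 2 + P 2 2 ^ 2) := by
        simp only [Fin.sum_univ_three]
        ring
      rw [hexp]
      simp only [Fin.sum_univ_three, hL]
      norm_num [Fin.ext_iff]
      rw [add_comm (s 1) (s 0), add_comm (s 2) (s 0), add_comm (s 2) (s 1)]
      linarith
    calc fnorm (L P) = Real.sqrt (∑ i, ∑ j, (L P) i j ^ 2) := rfl
      _ ≤ Real.sqrt ((2 / (s 1 + s 2)) ^ 2 * ∑ i, ∑ j, P i j ^ 2) := Real.sqrt_le_sqrt hsum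
      _ = (2 / (s 1 + s 2)) * fnorm P := by
          rw [Real.sqrt_mul (sq_nonneg _), Real.sqrt_sq h2c]; rfl
  · refine ⟨Matrix.of ![![0,0,0],![0,0,1],![0,-1,0]], ?_, ?_⟩
    · intro h
      have := congrFun (congrFun h 1) 2
      simp at this
    · have hLv : ∑ i, ∑ j, (L (Matrix.of ![![0,0,0],![0,0,1],![0,-1,0]])) i j ^ 2
          = (2 / (s 1 + s 2)) ^ 2 * 2 := by
        simp only [Fin.sum_univ_three, hL]
        norm_num [Fin.ext_iff, Matrix.vecHead, Matrix.vecTail, Matrix.cons_val_zero, Matrix.cons_val_one, Matrix.cons_val_two]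
        rw [add_comm (s 2) (s 1)]
        ring
      have hP : fnorm (Matrix.of ![![0,0,0],![0,0,1],![0,-1,0]] : Matrix (Fin 3) (Fin 3) ℝ)
          = Real.sqrt 2 := by
        simp [fnorm, Fin.sum_univ_three]
        norm_num
      rw [hP]
      show Real.sqrt _ = _
      rw [hLv, Real.sqrt_mul (sq_nonneg _), Real.sqrt_sq h2c]
end

section
/- Let L⁻ : Matrix (Fin 3) (Fin 3) ℝ → Matrix (Fin 3) (Fin 3) ℝ be the linear map P ↦ Ψ where Ψ_12 = (P_21 − P_12)/(s_1+s_2), Ψ_13 = −(P_13 + P_31)/(s_1+s_3), Ψ_23 = −(P_23 + P_32)/(s_2+s_3), Ψ is antisymmetric in the (1,2) entry pair (Ψ_21 = −Ψ_12) and Ψ_ji = Ψ-determined accordingly, and Ψ_ii = 0, with s_1 > s_2 > s_3 > 0. Then L⁻ has rank 3 and its nonzero singular values are 2/(s_1+s_2), 2/(s_1+s_3), 2/(s_2+s_3), identical to those of the map L of the det > 0 case. -/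
open Matrix BigOperators

/-- Frobenius inner product on 3×3 real matrices. -/
def finner (A B : Matrix (Fin 3) (Fin 3) ℝ) : ℝ := ∑ i, ∑ j, A i j * B i j

set_option maxHeartbeats 1000000 in
/-- The `det < 0` SVD Jacobian (in the SVD frame): the linear map
`L⁻ : P ↦ Ψ` with `Ψ₁₂ = (P₂₁ − P₁₂)/(s₁+s₂)`, `Ψ₁₃ = −(P₁₃ + P₃₁)/(s₁+s₃)`,
`Ψ₂₃ = −(P₂₃ + P₃₂)/(s₂+s₃)`, `Ψ` antisymmetric and zero on the diagonal,
for `s₁ > s₂ > s₃ > 0`, has rank 3 and its nonzero singular values with respect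
to the Frobenius inner product are `2/(s₁+s₂)`, `2/(s₁+s₃)`, `2/(s₂+s₃)` —
identical to those of the `det > 0` case. -/
theorem svd_neg_det_jacobian_spectrum
    (s : Fin 3 → ℝ) (hpos : ∀ i, 0 < s i)
    (hord : s 1 < s 0 ∧ s 2 < s 1)
    (L : Matrix (Fin 3) (Fin 3) ℝ →ₗ[ℝ] Matrix (Fin 3) (Fin 3) ℝ)
    (hL : ∀ P : Matrix (Fin 3) (Fin 3) ℝ,
      L P = !![0, (P 1 0 - P 0 1) / (s 0 + s 1), -(P 0 2 + P 2 0) / (s 0 + s 2);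
               -((P 1 0 - P 0 1) / (s 0 + s 1)), 0, -(P 1 2 + P 2 1) / (s 1 + s 2);
               (P 0 2 + P 2 0) / (s 0 + s 2), (P 1 2 + P 2 1) / (s 1 + s 2), 0]) :
    Module.finrank ℝ (LinearMap.range L) = 3 ∧
    ∃ v u : Fin 3 → Matrix (Fin 3) (Fin 3) ℝ,
      (∀ k l, finner (v k) (v l) = if k = l then 1 else 0) ∧
      (∀ k l, finner (u k) (u l) = if k = l then 1 else 0) ∧
      (∀ k, L (v k)
        = (![2 / (s 0 + s 1), 2 / (s 0 + s 2), 2 / (s 1 + s 2)] k) • u k) ∧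
      (∀ P : Matrix (Fin 3) (Fin 3) ℝ, (∀ k, finner (v k) P = 0) → L P = 0) := by
  obtain ⟨h10, h21⟩ := hord
  have h0 := hpos 0; have h1 := hpos 1; have h2 := hpos 2
  have h01 : (0:ℝ) < s 0 + s 1 := by linarith
  have h02 : (0:ℝ) < s 0 + s 2 := by linarith
  have h12 : (0:ℝ) < s 1 + s 2 := by linarith
  set c : ℝ := (Real.sqrt 2)⁻¹ with hcdef
  have hsq : Real.sqrt 2 * Real.sqrt 2 = 2 := Real.mul_self_sqrt (by norm_num)
  have hs0 : Real.sqrt 2 ≠ 0 := by positivity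
  have hc0 : c ≠ 0 := inv_ne_zero hs0
  have hcc : c * c = 1 / 2 := by
    rw [hcdef]; field_simp; rw [Real.sq_sqrt (by norm_num)]
  set u : Fin 3 → Matrix (Fin 3) (Fin 3) ℝ :=
    ![!![0, c, 0; -c, 0, 0; 0, 0, 0],
      !![0, 0, -c; 0, 0, 0; c, 0, 0],
      !![0, 0, 0; 0, 0, -c; 0, c, 0]] with hu
  set v : Fin 3 → Matrix (Fin 3) (Fin 3) ℝ :=
    ![!![0, -c, 0; c, 0, 0; 0, 0, 0],
      !![0, 0, c; 0, 0, 0; c, 0, 0],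
      !![0, 0, 0; 0, 0, c; 0, c, 0]] with hv
  have hvv : ∀ k l, finner (v k) (v l) = if k = l then 1 else 0 := by
    intro k l
    fin_cases k <;> fin_cases l <;>
      simp [finner, hv, Fin.sum_univ_three, Matrix.vecHead, Matrix.vecTail] <;> linarith [hcc]
  have huu : ∀ k l, finner (u k) (u l) = if k = l then 1 else 0 := by
    intro k l
    fin_cases k <;> fin_cases l <;>
      simp [finner, hu, Fin.sum_univ_three, Matrix.vecHead, Matrix.vecTail] <;> linarith [hcc]
  have hLv : ∀ k, L (v k)
      = (![2 / (s 0 + s 1), 2 / (s 0 + s 2), 2 / (s 1 + s 2)] k) • u k := by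
    intro k
    fin_cases k <;>
      · rw [hL]
        ext i j
        fin_cases i <;> fin_cases j <;>
          simp [hu, hv, Matrix.smul_apply, Matrix.vecHead, Matrix.vecTail] <;> ring
  refine ⟨?_, v, u, hvv, huu, hLv, ?_⟩
  · -- rank
    have hindep : LinearIndependent ℝ u := by
      rw [Fintype.linearIndependent_iff]
      intro g hg
      have e0 := congrFun (congrFun hg 0) 1
      have e1 := congrFun (congrFun hg 2) 0
      have e2 := congrFun (congrFun hg 2) 1
      simp [Fin.sum_univ_three, hu, Matrix.sum_apply, Matrix.smul_apply,
        Matrix.vecHead, Matrix.vecTail, hc0] at e0 e1 e2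
      intro i
      fin_cases i <;> assumption
    have hrange : LinearMap.range L = Submodule.span ℝ (Set.range u) := by
      apply le_antisymm
      · rintro _ ⟨P, rfl⟩
        have key : L P = ((P 1 0 - P 0 1) / ((s 0 + s 1) * c)) • u 0
            + ((P 0 2 + P 2 0) / ((s 0 + s 2) * c)) • u 1
            + ((P 1 2 + P 2 1) / ((s 1 + s 2) * c)) • u 2 := by
          rw [hL]
          ext i j
          fin_cases i <;> fin_cases j <;>
            simp [hu, Matrix.add_apply, Matrix.smul_apply,
              Matrix.vecHead, Matrix.vecTail] <;>
            field_simp <;> ring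
        rw [key]
        have m0 : u 0 ∈ Submodule.span ℝ (Set.range u) :=
          Submodule.subset_span ⟨0, rfl⟩
        have m1 : u 1 ∈ Submodule.span ℝ (Set.range u) :=
          Submodule.subset_span ⟨1, rfl⟩
        have m2 : u 2 ∈ Submodule.span ℝ (Set.range u) :=
          Submodule.subset_span ⟨2, rfl⟩
        exact Submodule.add_mem _ (Submodule.add_mem _
          (Submodule.smul_mem _ _ m0) (Submodule.smul_mem _ _ m1))
          (Submodule.smul_mem _ _ m2)
      · rw [Submodule.span_le]
        rintro _ ⟨k, rfl⟩
        fin_cases k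
        · refine ⟨((s 0 + s 1) / 2) • v 0, ?_⟩
          rw [L.map_smul, hLv 0]
          simp only [Matrix.cons_val_zero]
          rw [smul_smul, show (s 0 + s 1) / 2 * (2 / (s 0 + s 1)) = 1 by
            field_simp, one_smul]
          rfl
        · refine ⟨((s 0 + s 2) / 2) • v 1, ?_⟩
          rw [L.map_smul, hLv 1]
          simp only [Matrix.cons_val_one, Matrix.head_cons, Matrix.cons_val_zero]
          rw [smul_smul, show (s 0 + s 2) / 2 * (2 / (s 0 + s 2)) = 1 by
            field_simp, one_smul]
          rfl
        · refine ⟨((s 1 + s 2) / 2) • v 2, ?_⟩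
          rw [L.map_smul, hLv 2]
          simp only [Matrix.cons_val_two, Matrix.tail_cons, Matrix.head_cons]
          rw [smul_smul, show (s 1 + s 2) / 2 * (2 / (s 1 + s 2)) = 1 by
            field_simp, one_smul]
          rfl
    rw [hrange, finrank_span_eq_card hindep]
    simp
  · -- kernel
    intro P hP
    have k0 := hP 0
    have k1 := hP 1
    have k2 := hP 2
    simp [finner, hv, Fin.sum_univ_three, Matrix.vecHead, Matrix.vecTail] at k0 k1 k2
    
    have e0 : P 1 0 - P 0 1 = 0 := by
      have h : c * (P 1 0 - P 0 1) = 0 := by linear_combination k0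
      exact (mul_eq_zero.mp h).resolve_left hc0
    have e1 : P 0 2 + P 2 0 = 0 := by
      have h : c * (P 0 2 + P 2 0) = 0 := by linear_combination k1
      exact (mul_eq_zero.mp h).resolve_left hc0
    have e2 : P 1 2 + P 2 1 = 0 := by
      have h : c * (P 1 2 + P 2 1) = 0 := by linear_combination k2
      exact (mul_eq_zero.mp h).resolve_left hc0
    rw [hL]
    ext i j
    fin_cases i <;> fin_cases j <;>
      simp [e0, e1, e2, Matrix.vecHead, Matrix.vecTail]
end
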